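/- Every integer n ≥ 1 has exactly one q-representation; that is, there exists a unique sequence of digits ε_i ∈ {0,1} (i ≥ 0), all but finitely many zero, with n = Σ_{i≥0} ε_i a_i and ε_i + ε_{i+1} + ⋯ + ε_{i+q−1} ≤ 1 for every i ≥ 0. -/

import Mathlib

/-- A finite set of indices is `q`-spread if any two distinct elements differ by at least `q`. -/
def NarayanaSpread (q : ℕ) (S : Finset ℕ) : Prop :=
  ∀ i ∈ S, ∀ j ∈ S, i < j → i + q ≤ j

lemma NarayanaSpread.subset {q : ℕ} {S T : Finset ℕ} (hT : NarayanaSpread q T) (h : S ⊆ T) :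
    NarayanaSpread q S := fun i hi j hj hij => hT i (h hi) j (h hj) hij

section Aux

variable {q : ℕ} {a : ℕ → ℕ}

lemma narayana_a_pos (ha0 : a 0 = 1)
    (harec : ∀ i, a (i + 1) = a i + a (i - (q - 1))) : ∀ i, 1 ≤ a i := by
  intro i
  induction i with
  | zero => omega
  | succ n ih => rw [harec]; omega

lemma narayana_a_mono (ha0 : a 0 = 1)
    (harec : ∀ i, a (i + 1) = a i + a (i - (q - 1))) : StrictMono a := by
  apply strictMono_nat_of_lt_succ
  intro n
  have := narayana_a_pos ha0 harec (n - (q - 1))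
  rw [harec]; omega

lemma narayana_mem_le_val {S : Finset ℕ} {j : ℕ} (hj : j ∈ S) :
    a j ≤ ∑ i ∈ S, a i :=
  Finset.single_le_sum (fun i _ => Nat.zero_le (a i)) hj

lemma narayana_val_lt (hq : 1 ≤ q) (ha0 : a 0 = 1)
    (harec : ∀ i, a (i + 1) = a i + a (i - (q - 1))) :
    ∀ S : Finset ℕ, NarayanaSpread q S → ∀ m, (∀ i ∈ S, i < m) → ∑ i ∈ S, a i < a m := by
  intro S
  induction S using Finset.strongInduction with
  | _ S ih =>
    intro hS m hm
    rcases S.eq_empty_or_nonempty with rfl | hne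
    · simp only [Finset.sum_empty]; exact narayana_a_pos ha0 harec m
    · set t := S.max' hne with ht
      have htS : t ∈ S := S.max'_mem hne
      have hsum : ∑ i ∈ S, a i = a t + ∑ i ∈ S.erase t, a i :=
        (Finset.add_sum_erase _ _ htS).symm
      have herase : ∀ j ∈ S.erase t, j < t - (q - 1) := by
        intro j hj
        have hjS := Finset.mem_of_mem_erase hj
        have hjt : j ≠ t := Finset.ne_of_mem_erase hj
        have hjle : j ≤ t := S.le_max' j hjS
        have := hS j hjS t htS (lt_of_le_of_ne hjle hjt)
        omega
      have h2 : ∑ i ∈ S.erase t, a i < a (t - (q - 1)) :=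
        ih (S.erase t) (Finset.erase_ssubset htS) (hS.subset (Finset.erase_subset _ _))
          _ herase
      have h3 : a (t + 1) = a t + a (t - (q - 1)) := harec t
      have h4 : a (t + 1) ≤ a m :=
        (narayana_a_mono ha0 harec).monotone (by have := hm t htS; omega)
      omega

lemma narayana_exists_rep (hq : 1 ≤ q) (ha0 : a 0 = 1)
    (harec : ∀ i, a (i + 1) = a i + a (i - (q - 1))) :
    ∀ n, ∃ S : Finset ℕ, NarayanaSpread q S ∧ ∑ i ∈ S, a i = n := by
  have hpos := narayana_a_pos ha0 harec
  have hmono := narayana_a_mono ha0 harec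
  have hge : ∀ i, i + 1 ≤ a i := by
    intro i
    induction i with
    | zero => omega
    | succ n ih => have := hpos (n - (q - 1)); rw [harec]; omega
  intro n
  induction n using Nat.strong_induction_on with
  | _ n ih =>
    rcases Nat.eq_zero_or_pos n with rfl | hn
    · exact ⟨∅, fun i hi => absurd hi (Finset.notMem_empty i), by simp⟩
    · set m := Nat.findGreatest (fun m => a m ≤ n) n with hmdef
      have h0 : a 0 ≤ n := by omega
      have hman : a m ≤ n :=
        Nat.findGreatest_spec (P := fun m => a m ≤ n) (Nat.zero_le n) h0
      have hm1 : n < a (m + 1) := by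
        rcases le_or_gt (m + 1) n with h | h
        · have := Nat.findGreatest_is_greatest (P := fun m => a m ≤ n) (k := m + 1)
            (by omega) h
          omega
        · have := hge (m + 1); omega
      have hrec := harec m
      obtain ⟨S', hS'spread, hS'val⟩ := ih (n - a m) (by have := hpos m; omega)
      have hS'small : ∀ j ∈ S', j < m - (q - 1) := by
        intro j hj
        have h1 : a j ≤ n - a m := hS'val ▸ narayana_mem_le_val hj
        have h2 : a j < a (m - (q - 1)) := by omega
        exact hmono.lt_iff_lt.mp h2
      have hmS' : m ∉ S' := by
        intro h; have := hS'small m h; omega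
      refine ⟨insert m S', ?_, ?_⟩
      · intro i hi j hj hij
        rcases Finset.mem_insert.mp hi with rfl | hi
        · rcases Finset.mem_insert.mp hj with rfl | hj
          · omega
          · have := hS'small j hj; omega
        · rcases Finset.mem_insert.mp hj with rfl | hj
          · have := hS'small i hi; omega
          · exact hS'spread i hi j hj hij
      · rw [Finset.sum_insert hmS', hS'val]; omega

lemma narayana_unique_rep (hq : 1 ≤ q) (ha0 : a 0 = 1)
    (harec : ∀ i, a (i + 1) = a i + a (i - (q - 1))) :
    ∀ n (S T : Finset ℕ), NarayanaSpread q S → NarayanaSpread q T →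
      ∑ i ∈ S, a i = n → ∑ i ∈ T, a i = n → S = T := by
  have hpos := narayana_a_pos ha0 harec
  have hmono := narayana_a_mono ha0 harec
  intro n
  induction n using Nat.strong_induction_on with
  | _ n ih =>
    intro S T hS hT hSn hTn
    rcases Nat.eq_zero_or_pos n with rfl | hn
    · have hSe : S = ∅ := by
        rcases S.eq_empty_or_nonempty with h | ⟨x, hx⟩
        · exact h
        · have := narayana_mem_le_val (a := a) hx; have := hpos x; omega
      have hTe : T = ∅ := by
        rcases T.eq_empty_or_nonempty with h | ⟨x, hx⟩
        · exact h
        · have := narayana_mem_le_val (a := a) hx; have := hpos x; omega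
      rw [hSe, hTe]
    · have hSne : S.Nonempty := by
        rcases S.eq_empty_or_nonempty with rfl | h
        · simp at hSn; omega
        · exact h
      have hTne : T.Nonempty := by
        rcases T.eq_empty_or_nonempty with rfl | h
        · simp at hTn; omega
        · exact h
      set s := S.max' hSne with hs
      set t := T.max' hTne with hts
      have hsS : s ∈ S := S.max'_mem hSne
      have htT : t ∈ T := T.max'_mem hTne
      have hsle : a s ≤ n := hSn ▸ narayana_mem_le_val hsS
      have htle : a t ≤ n := hTn ▸ narayana_mem_le_val htT
      have hslt : n < a (s + 1) := by
        have := narayana_val_lt hq ha0 harec S hS (s + 1)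
          (fun i hi => Nat.lt_succ_of_le (S.le_max' i hi))
        omega
      have htlt : n < a (t + 1) := by
        have := narayana_val_lt hq ha0 harec T hT (t + 1)
          (fun i hi => Nat.lt_succ_of_le (T.le_max' i hi))
        omega
      clear_value s t
      have hst : s = t := by
        have h1 : s < t + 1 := hmono.lt_iff_lt.mp (by omega)
        have h2 : t < s + 1 := hmono.lt_iff_lt.mp (by omega)
        omega
      subst hst
      have hSsum : ∑ i ∈ S.erase s, a i = n - a s := by
        have := (Finset.add_sum_erase _ a hsS).symm
        omega
      have hTsum : ∑ i ∈ T.erase s, a i = n - a s := by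
        have := (Finset.add_sum_erase _ a htT).symm
        omega
      have herase : S.erase s = T.erase s :=
        ih (n - a s) (by have := hpos s; omega) _ _
          (hS.subset (Finset.erase_subset _ _)) (hT.subset (Finset.erase_subset _ _))
          hSsum hTsum
      have : insert s (S.erase s) = insert s (T.erase s) := by rw [herase]
      rwa [Finset.insert_erase hsS, Finset.insert_erase htT] at this

end Aux

/-- Fix `q ≥ 1` and let `G` be the fundamental recurrence attached to
`x^q − x^{q−1} − 1`, and set `a_i = G_{2q−2+i}`.  Every integer `n ≥ 1` has exactly one
`q`-representation: a sequence of digits `ε i ∈ {0,1}`, all but finitely many zero, with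
`n = ∑ᶠ i, ε i * a i` and `ε i + ε (i+1) + ⋯ + ε (i+q−1) ≤ 1` for every `i`. -/
theorem narayana_q_representation_existsUnique
    (q : ℕ) (hq : 1 ≤ q) (G : ℕ → ℕ)
    (hG0 : ∀ k, k < q - 1 → G k = 0)
    (hG1 : G (q - 1) = 1)
    (hGrec : ∀ k, G (k + q) = G (k + q - 1) + G k)
    (n : ℕ) (hn : 1 ≤ n) :
    ∃! ε : ℕ → ℕ,
      (Function.support ε).Finite ∧
      (∀ i, ε i ≤ 1) ∧
      (∀ i, ∑ j ∈ Finset.range q, ε (i + j) ≤ 1) ∧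
      n = ∑ᶠ i, ε i * G (2 * q - 2 + i) := by
  set a : ℕ → ℕ := fun i => G (2 * q - 2 + i) with ha
  -- basic facts about G on the plateau
  have hGone : ∀ k, k ≤ q - 1 → G (q - 1 + k) = 1 := by
    intro k
    induction k with
    | zero => intro _; simpa using hG1
    | succ m ih =>
      intro hm
      have e1 : q - 1 + (m + 1) = m + q := by omega
      have e2 : m + q - 1 = q - 1 + m := by omega
      rw [e1, hGrec, e2, ih (by omega), hG0 m (by omega)]
  have hGshift : ∀ i, G (q - 1 + i) = a (i - (q - 1)) := by
    intro i
    rcases le_or_gt (q - 1) i with h | h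
    · have e : q - 1 + i = 2 * q - 2 + (i - (q - 1)) := by omega
      rw [e]
    · have e : i - (q - 1) = 0 := by omega
      rw [e]
      have h1 : G (q - 1 + i) = 1 := hGone i (by omega)
      have h2 : a 0 = 1 := by
        show G (2 * q - 2 + 0) = 1
        have e2 : 2 * q - 2 + 0 = q - 1 + (q - 1) := by omega
        rw [e2]; exact hGone (q - 1) le_rfl
      rw [h1, h2]
  have ha0 : a 0 = 1 := by
    show G (2 * q - 2 + 0) = 1
    have e2 : 2 * q - 2 + 0 = q - 1 + (q - 1) := by omega
    rw [e2]; exact hGone (q - 1) le_rfl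
  have harec : ∀ i, a (i + 1) = a i + a (i - (q - 1)) := by
    intro i
    show G (2 * q - 2 + (i + 1)) = G (2 * q - 2 + i) + a (i - (q - 1))
    have e1 : 2 * q - 2 + (i + 1) = (q - 1 + i) + q := by omega
    have e2 : q - 1 + i + q - 1 = 2 * q - 2 + i := by omega
    rw [e1, hGrec, e2, hGshift i]
  have hpos := narayana_a_pos (q := q) ha0 harec
  -- the indicator function of a finset
  classical
  let ind : Finset ℕ → ℕ → ℕ := fun S i => if i ∈ S then 1 else 0
  have hind_sum : ∀ S : Finset ℕ, ∑ᶠ i, ind S i * a i = ∑ i ∈ S, a i := by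
    intro S
    have hsupp : Function.support (fun i => ind S i * a i) ⊆ (S : Set ℕ) := by
      intro i hi
      simp only [Function.mem_support, ind] at hi
      rw [Finset.mem_coe]
      by_contra h
      simp [h] at hi
    rw [finsum_eq_sum_of_support_subset _ hsupp]
    apply Finset.sum_congr rfl
    intro i hi
    simp [ind, hi]
  -- indicator of a spread set satisfies the window condition
  have hind_window : ∀ S : Finset ℕ, NarayanaSpread q S →
      ∀ i, ∑ j ∈ Finset.range q, ind S (i + j) ≤ 1 := by
    intro S hS i
    have : ∑ j ∈ Finset.range q, ind S (i + j)
        = ((Finset.range q).filter (fun j => i + j ∈ S)).card := by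
      simp [ind, Finset.sum_boole]
    rw [this]
    apply Finset.card_le_one.mpr
    intro j1 h1 j2 h2
    simp only [Finset.mem_filter, Finset.mem_range] at h1 h2
    rcases lt_trichotomy j1 j2 with h | h | h
    · have := hS (i + j1) h1.2 (i + j2) h2.2 (by omega); omega
    · exact h
    · have := hS (i + j2) h2.2 (i + j1) h1.2 (by omega); omega
  -- existence
  obtain ⟨S₀, hS₀spread, hS₀val⟩ := narayana_exists_rep hq ha0 harec n
  refine ⟨ind S₀, ⟨?_, ?_, hind_window S₀ hS₀spread, ?_⟩, ?_⟩
  · apply Set.Finite.subset S₀.finite_toSet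
    intro i hi
    simp only [Function.mem_support, ind] at hi
    rw [Finset.mem_coe]
    by_contra h
    simp [h] at hi
  · intro i; simp only [ind]; split <;> omega
  · rw [hind_sum S₀, hS₀val]
  -- uniqueness
  · rintro ε ⟨hfin, hle, hwin, hval⟩
    set S : Finset ℕ := hfin.toFinset with hSdef
    have hmemS : ∀ i, i ∈ S ↔ ε i ≠ 0 := by
      intro i
      rw [hSdef, Set.Finite.mem_toFinset, Function.mem_support]
    have hεind : ε = ind S := by
      funext i
      simp only [ind]
      split
      · next h => have := (hmemS i).mp h; have := hle i; omega
      · next h =>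
        by_contra hc
        exact h ((hmemS i).mpr (by omega))
    have hSspread : NarayanaSpread q S := by
      intro i hi j hj hij
      by_contra hcon
      have hjlt : j - i < q := by omega
      have key := hwin i
      have hsub : ({0, j - i} : Finset ℕ) ⊆ Finset.range q := by
        intro x hx
        simp only [Finset.mem_insert, Finset.mem_singleton] at hx
        rcases hx with rfl | rfl <;> simp [Finset.mem_range] <;> omega
      have hpair : ∑ x ∈ ({0, j - i} : Finset ℕ), ε (i + x) = ε (i + 0) + ε (i + (j - i)) :=
        Finset.sum_pair (by omega)
      have hmono_sum : ∑ x ∈ ({0, j - i} : Finset ℕ), ε (i + x)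
          ≤ ∑ x ∈ Finset.range q, ε (i + x) :=
        Finset.sum_le_sum_of_subset hsub
      have hi' := (hmemS i).mp hi
      have hj' := (hmemS j).mp hj
      have e : i + (j - i) = j := by omega
      rw [hpair, e] at hmono_sum
      simp only [Nat.add_zero] at hmono_sum
      omega
    have hSval : ∑ i ∈ S, a i = n := by
      rw [hεind] at hval
      rw [← hind_sum S, ← hval]
    have : S = S₀ := narayana_unique_rep hq ha0 harec n S S₀ hSspread hS₀spread hSval hS₀val
    rw [hεind, this]
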